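/- Let T, K, M, ρ, ρ_max be real numbers with T > 2K > 0, M > 1, K > 1 and 0 < ρ ≤ ρ_max. Define the feasible set F = {(α, T_d) : 0 ≤ α ≤ 1, 0 < T_d ≤ T − K, ρTα + ρ_max·T_d ≤ ρ_max·T, ρTα + ρ_max·T_d ≥ ρT}, the MRC rate R(α, T_d) = (T_d·K/T)·log₂(1 + (M−1)·α(1−α)(ρT)² / ( α(1−α)(ρT)²(K−1) + K(1−α)ρT + αρT·T_d + T_d )), and with T_d° = T − K set α† = (√((ρTK + T_d°)(ρT·T_d° + T_d°)) − (ρTK + T_d°)) / (ρT(T_d° − K)), α₁ = ρ_max·K/(ρT), α₂ = 1 − ρ_max(T − K)/(ρT). If α₂ < α† < α₁, then (α†, T − K) ∈ F and R(α, T_d) ≤ R(α†, T − K) for every (α, T_d) ∈ F. -/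

import Mathlib

open Real

/-- `log(v+c) - log v ≥ c/(v+c)`. -/
lemma log_ratio_lb (v c : ℝ) (hv : 0 < v) (hc : 0 ≤ c) :
    c / (v + c) ≤ Real.log (v + c) - Real.log v := by
  have hvc : 0 < v + c := by linarith
  have h := Real.log_le_sub_one_of_pos (show 0 < v / (v + c) by positivity)
  rw [Real.log_div (ne_of_gt hv) (ne_of_gt hvc)] at h
  have h2 : v / (v + c) - 1 = -(c / (v + c)) := by field_simp; ring
  linarith [h2 ▸ h]

lemma log_ratio_diff (u v c : ℝ) (hu : 0 < u) (huv : u ≤ v) (hc : 0 ≤ c) :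
    (Real.log (u + c) - Real.log u) - (Real.log (v + c) - Real.log v)
      ≤ c * (v - u) / (u * (v + c)) := by
  have hv : 0 < v := lt_of_lt_of_le hu huv
  have hvc : 0 < v + c := by linarith
  have huc : 0 < u + c := by linarith
  have h := Real.log_le_sub_one_of_pos (show 0 < (u + c) * v / (u * (v + c)) by positivity)
  rw [Real.log_div (by positivity) (by positivity), Real.log_mul (ne_of_gt huc) (ne_of_gt hv),
    Real.log_mul (ne_of_gt hu) (ne_of_gt hvc)] at h
  have h2 : (u + c) * v / (u * (v + c)) - 1 = c * (v - u) / (u * (v + c)) := by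
    field_simp; ring
  linarith [h2 ▸ h]

/-- monotonicity of `x ↦ x log(1 + c/(a+bx))`. -/
lemma mono_td (a c b x y : ℝ) (ha : 0 ≤ a) (hc : 0 ≤ c) (hb : 0 < b)
    (hx : 0 < x) (hxy : x ≤ y) :
    x * Real.log (1 + c / (a + b * x)) ≤ y * Real.log (1 + c / (a + b * y)) := by
  have hu : 0 < a + b * x := by nlinarith
  have hv : 0 < a + b * y := by nlinarith
  have huv : a + b * x ≤ a + b * y := by nlinarith
  set u := a + b * x with hu_def
  set v := a + b * y with hv_def
  have hvc : 0 < v + c := by linarith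
  have e1 : (1 : ℝ) + c / u = (u + c) / u := by field_simp
  have e2 : (1 : ℝ) + c / v = (v + c) / v := by field_simp
  rw [e1, e2, Real.log_div (by linarith) (ne_of_gt hu), Real.log_div (by linarith) (ne_of_gt hv)]
  have hlb := log_ratio_lb v c hv hc
  have hdiff := log_ratio_diff u v c hu huv hc
  have hA : x * (Real.log (u + c) - Real.log u)
      ≤ x * (Real.log (v + c) - Real.log v) + x * (c * (v - u) / (u * (v + c))) := by
    nlinarith [mul_le_mul_of_nonneg_left hdiff hx.le]
  have hB : x * (c * (v - u) / (u * (v + c))) ≤ (y - x) * (c / (v + c)) := by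
    have hvu : v - u = b * (y - x) := by rw [hu_def, hv_def]; ring
    have e3 : x * (c * (v - u) / (u * (v + c))) = x * c * (b * (y - x)) / (u * (v + c)) := by
      rw [hvu]; ring
    have e4 : (y - x) * (c / (v + c)) = (y - x) * c / (v + c) := by ring
    rw [e3, e4, div_le_div_iff₀ (by positivity) hvc]
    have h5 : 0 ≤ c * (y - x) * (v + c) * a := by
      have : (0:ℝ) ≤ y - x := by linarith
      positivity
    have e5 : (y - x) * c * (u * (v + c)) - x * c * (b * (y - x)) * (v + c)
        = c * (y - x) * (v + c) * a := by rw [hu_def]; ring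
    linarith [h5, e5]
  have hC : (y - x) * (c / (v + c)) ≤ (y - x) * (Real.log (v + c) - Real.log v) :=
    mul_le_mul_of_nonneg_left hlb (by linarith)
  nlinarith [hA, hB, hC]

/-- key algebraic optimality of `β = s/(s+t)`. -/
lemma cross' (s t c₂ m α : ℝ) (hs : 0 < s) (ht : 0 < t) (hc : 0 ≤ c₂) (hm : 0 ≤ m)
    (hα0 : 0 ≤ α) (hα1 : α ≤ 1) :
    m * α * (1 - α) * ((s / (s + t)) * (1 - s / (s + t)) * c₂
        + s ^ 2 * (1 - s / (s + t)) + t ^ 2 * (s / (s + t)))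
      ≤ m * (s / (s + t)) * (1 - s / (s + t))
          * (α * (1 - α) * c₂ + s ^ 2 * (1 - α) + t ^ 2 * α) := by
  have hst : 0 < s + t := by linarith
  have eL : m * α * (1 - α) * ((s / (s + t)) * (1 - s / (s + t)) * c₂
        + s ^ 2 * (1 - s / (s + t)) + t ^ 2 * (s / (s + t)))
      = m * α * (1 - α) * (s * t * c₂ + s * t * (s + t) ^ 2) / (s + t) ^ 2 := by
    field_simp; ring
  have eR : m * (s / (s + t)) * (1 - s / (s + t))
          * (α * (1 - α) * c₂ + s ^ 2 * (1 - α) + t ^ 2 * α)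
      = m * (s * t) * (α * (1 - α) * c₂ + s ^ 2 * (1 - α) + t ^ 2 * α) / (s + t) ^ 2 := by
    field_simp; ring
  rw [eL, eR, div_le_div_iff_of_pos_right (by positivity)]
  have hid : m * (s * t) * (α * (1 - α) * c₂ + s ^ 2 * (1 - α) + t ^ 2 * α)
      - m * α * (1 - α) * (s * t * c₂ + s * t * (s + t) ^ 2)
      = m * (s * t) * (s * (1 - α) - t * α) ^ 2 := by ring
  nlinarith [mul_nonneg (mul_nonneg hm (mul_pos hs ht).le) (sq_nonneg (s * (1 - α) - t * α))]

lemma alpha_eq (P Td0 K : ℝ) (hP : 0 < P) (hK : 0 < K) (hTd0 : K < Td0) :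
    (Real.sqrt ((P * K + Td0) * (P * Td0 + Td0)) - (P * K + Td0)) / (P * (Td0 - K))
      = Real.sqrt (P * K + Td0) / (Real.sqrt (P * K + Td0) + Real.sqrt (P * Td0 + Td0)) := by
  have hTd0' : 0 < Td0 := hK.trans hTd0
  have ha : 0 < P * K + Td0 := by positivity
  have hb : 0 < P * Td0 + Td0 := by positivity
  have hab : P * K + Td0 < P * Td0 + Td0 := by nlinarith
  set s := Real.sqrt (P * K + Td0) with hs_def
  set t := Real.sqrt (P * Td0 + Td0) with ht_def
  have hs : 0 < s := Real.sqrt_pos.mpr ha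
  have ht : 0 < t := Real.sqrt_pos.mpr hb
  have hs2 : s ^ 2 = P * K + Td0 := Real.sq_sqrt ha.le
  have ht2 : t ^ 2 = P * Td0 + Td0 := Real.sq_sqrt hb.le
  have hst : s < t := Real.sqrt_lt_sqrt ha.le hab
  have h1 : Real.sqrt ((P * K + Td0) * (P * Td0 + Td0)) = s * t := Real.sqrt_mul ha.le _
  have h2 : P * (Td0 - K) = t ^ 2 - s ^ 2 := by rw [hs2, ht2]; ring
  rw [h1, ← hs2, h2, div_eq_div_iff (by nlinarith) (by linarith)]
  ring

lemma den_pos (T K ρ γ Td : ℝ) (hT : 0 < T) (hK : 1 < K) (hρ : 0 < ρ)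
    (hγ0 : 0 ≤ γ) (hγ1 : γ ≤ 1) (hTd : 0 < Td) :
    0 < γ * (1 - γ) * (ρ * T) ^ 2 * (K - 1) + K * (1 - γ) * ρ * T + γ * ρ * T * Td + Td := by
  have h1 : 0 ≤ γ * (1 - γ) * (ρ * T) ^ 2 * (K - 1) :=
    mul_nonneg (mul_nonneg (mul_nonneg hγ0 (by linarith)) (sq_nonneg _)) (by linarith)
  have h2 : 0 ≤ K * (1 - γ) * ρ * T :=
    mul_nonneg (mul_nonneg (mul_nonneg (by linarith) (by linarith)) hρ.le) hT.le
  have h3 : 0 ≤ γ * ρ * T * Td :=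
    mul_nonneg (mul_nonneg (mul_nonneg hγ0 hρ.le) hT.le) hTd.le
  linarith

lemma main_bound (T K M ρ : ℝ) (hTK : 2 * K < T) (hK : 1 < K) (hM : 1 < M) (hρ : 0 < ρ)
    (α Td β : ℝ) (hα0 : 0 ≤ α) (hα1 : α ≤ 1) (hTd : 0 < Td) (hTdle : Td ≤ T - K)
    (hβ : β = Real.sqrt (ρ * T * K + (T - K)) /
      (Real.sqrt (ρ * T * K + (T - K)) + Real.sqrt (ρ * T * (T - K) + (T - K)))) :
    (Td * K / T) * Real.logb 2 (1 +
        (M - 1) * α * (1 - α) * (ρ * T) ^ 2 /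
          (α * (1 - α) * (ρ * T) ^ 2 * (K - 1) + K * (1 - α) * ρ * T
            + α * ρ * T * Td + Td))
      ≤ ((T - K) * K / T) * Real.logb 2 (1 +
        (M - 1) * β * (1 - β) * (ρ * T) ^ 2 /
          (β * (1 - β) * (ρ * T) ^ 2 * (K - 1) + K * (1 - β) * ρ * T
            + β * ρ * T * (T - K) + (T - K))) := by
  have hT : 0 < T := by linarith
  have hP : 0 < ρ * T := mul_pos hρ hT
  have hTd0 : 0 < T - K := by linarith
  have ha : 0 < ρ * T * K + (T - K) := by positivity
  have hb : 0 < ρ * T * (T - K) + (T - K) := by nlinarith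
  set s := Real.sqrt (ρ * T * K + (T - K)) with hs_def
  set t := Real.sqrt (ρ * T * (T - K) + (T - K)) with ht_def
  have hs : 0 < s := Real.sqrt_pos.mpr ha
  have ht : 0 < t := Real.sqrt_pos.mpr hb
  have hs2 : s ^ 2 = ρ * T * K + (T - K) := Real.sq_sqrt ha.le
  have ht2 : t ^ 2 = ρ * T * (T - K) + (T - K) := Real.sq_sqrt hb.le
  have hst : 0 < s + t := by linarith
  have hβ0 : 0 ≤ β := by rw [hβ]; positivity
  have hβ1 : β ≤ 1 := by rw [hβ, div_le_one hst]; linarith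
  have hlog2 : 0 < Real.log 2 := Real.log_pos one_lt_two
  have h1α : (0:ℝ) ≤ 1 - α := by linarith
  have hA : 0 ≤ α * (1 - α) * (ρ * T) ^ 2 * (K - 1) + K * (1 - α) * (ρ * T) := by
    have h1 : 0 ≤ α * (1 - α) * (ρ * T) ^ 2 * (K - 1) :=
      mul_nonneg (mul_nonneg (mul_nonneg hα0 h1α) (sq_nonneg _)) (by linarith)
    have h2 : 0 ≤ K * (1 - α) * (ρ * T) :=
      mul_nonneg (mul_nonneg (by linarith) h1α) hP.le
    linarith
  have hc : 0 ≤ (M - 1) * α * (1 - α) * (ρ * T) ^ 2 :=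
    mul_nonneg (mul_nonneg (mul_nonneg (by linarith) hα0) h1α) (sq_nonneg _)
  have hB : 0 < α * (ρ * T) + 1 := by nlinarith [mul_nonneg hα0 hP.le]
  have hADen : 0 < α * (1 - α) * (ρ * T) ^ 2 * (K - 1) + K * (1 - α) * (ρ * T)
      + (α * (ρ * T) + 1) * (T - K) := by
    nlinarith [mul_pos hB hTd0]
  have hDβpos : 0 < β * (1 - β) * (ρ * T) ^ 2 * (K - 1) + K * (1 - β) * ρ * T
      + β * ρ * T * (T - K) + (T - K) := den_pos T K ρ β (T - K) hT hK hρ hβ0 hβ1 hTd0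
  have hmono := mono_td (α * (1 - α) * (ρ * T) ^ 2 * (K - 1) + K * (1 - α) * (ρ * T))
    ((M - 1) * α * (1 - α) * (ρ * T) ^ 2) (α * (ρ * T) + 1) Td (T - K)
    hA hc hB hTd hTdle
  have hm : 0 ≤ (M - 1) * (ρ * T) ^ 2 := mul_nonneg (by linarith) (sq_nonneg _)
  have hc₂ : 0 ≤ (ρ * T) ^ 2 * (K - 1) := mul_nonneg (sq_nonneg _) (by linarith)
  have hcross := cross' s t ((ρ * T) ^ 2 * (K - 1)) ((M - 1) * (ρ * T) ^ 2) α
    hs ht hc₂ hm hα0 hα1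
  rw [← hβ] at hcross
  have hdivle : (M - 1) * α * (1 - α) * (ρ * T) ^ 2 /
      (α * (1 - α) * (ρ * T) ^ 2 * (K - 1) + K * (1 - α) * (ρ * T)
        + (α * (ρ * T) + 1) * (T - K))
      ≤ (M - 1) * β * (1 - β) * (ρ * T) ^ 2 /
      (β * (1 - β) * (ρ * T) ^ 2 * (K - 1) + K * (1 - β) * ρ * T
        + β * ρ * T * (T - K) + (T - K)) := by
    rw [div_le_div_iff₀ hADen hDβpos]
    calc (M - 1) * α * (1 - α) * (ρ * T) ^ 2 *
          (β * (1 - β) * (ρ * T) ^ 2 * (K - 1) + K * (1 - β) * ρ * T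
            + β * ρ * T * (T - K) + (T - K))
        = (M - 1) * (ρ * T) ^ 2 * α * (1 - α) *
            (β * (1 - β) * ((ρ * T) ^ 2 * (K - 1)) + s ^ 2 * (1 - β) + t ^ 2 * β) := by
          rw [hs2, ht2]; ring
      _ ≤ (M - 1) * (ρ * T) ^ 2 * β * (1 - β) *
            (α * (1 - α) * ((ρ * T) ^ 2 * (K - 1)) + s ^ 2 * (1 - α) + t ^ 2 * α) := hcross
      _ = (M - 1) * β * (1 - β) * (ρ * T) ^ 2 *
            (α * (1 - α) * (ρ * T) ^ 2 * (K - 1) + K * (1 - α) * (ρ * T)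
              + (α * (ρ * T) + 1) * (T - K)) := by
          rw [hs2, ht2]; ring
  calc (Td * K / T) * Real.logb 2 (1 +
        (M - 1) * α * (1 - α) * (ρ * T) ^ 2 /
          (α * (1 - α) * (ρ * T) ^ 2 * (K - 1) + K * (1 - α) * ρ * T
            + α * ρ * T * Td + Td))
      = (K / (T * Real.log 2)) * (Td * Real.log (1 +
          (M - 1) * α * (1 - α) * (ρ * T) ^ 2 /
            (α * (1 - α) * (ρ * T) ^ 2 * (K - 1) + K * (1 - α) * (ρ * T)
              + (α * (ρ * T) + 1) * Td))) := by
        rw [show α * (1 - α) * (ρ * T) ^ 2 * (K - 1) + K * (1 - α) * ρ * T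
            + α * ρ * T * Td + Td
          = α * (1 - α) * (ρ * T) ^ 2 * (K - 1) + K * (1 - α) * (ρ * T)
            + (α * (ρ * T) + 1) * Td from by ring]
        simp only [Real.logb]
        ring
    _ ≤ (K / (T * Real.log 2)) * ((T - K) * Real.log (1 +
          (M - 1) * α * (1 - α) * (ρ * T) ^ 2 /
            (α * (1 - α) * (ρ * T) ^ 2 * (K - 1) + K * (1 - α) * (ρ * T)
              + (α * (ρ * T) + 1) * (T - K)))) :=
        mul_le_mul_of_nonneg_left hmono
          (div_nonneg (by linarith) (mul_pos hT hlog2).le)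
    _ = ((T - K) * K / T) * Real.logb 2 (1 +
          (M - 1) * α * (1 - α) * (ρ * T) ^ 2 /
            (α * (1 - α) * (ρ * T) ^ 2 * (K - 1) + K * (1 - α) * (ρ * T)
              + (α * (ρ * T) + 1) * (T - K))) := by
        simp only [Real.logb]; ring
    _ ≤ ((T - K) * K / T) * Real.logb 2 (1 +
        (M - 1) * β * (1 - β) * (ρ * T) ^ 2 /
          (β * (1 - β) * (ρ * T) ^ 2 * (K - 1) + K * (1 - β) * ρ * T
            + β * ρ * T * (T - K) + (T - K))) := by
        refine mul_le_mul_of_nonneg_left ?_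
          (div_nonneg (mul_nonneg hTd0.le (by linarith)) hT.le)
        refine Real.logb_le_logb_of_le one_lt_two ?_ (by linarith [hdivle])
        have h0 : 0 ≤ (M - 1) * α * (1 - α) * (ρ * T) ^ 2 /
            (α * (1 - α) * (ρ * T) ^ 2 * (K - 1) + K * (1 - α) * (ρ * T)
              + (α * (ρ * T) + 1) * (T - K)) := div_nonneg hc hADen.le
        linarith

/-- Case 3 of the joint optimization for MRC, neither power limited by
`ρ_max`: if `α₂ < α† < α₁` then `(α†, T-K)` is feasible and maximizes the MRC rate
over the feasible set `F`. -/
theorem mrc_joint_opt_case3 (T K M ρ ρmax : ℝ) (hTK : 2 * K < T) (hK0 : 0 < K)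
    (hK : 1 < K) (hM : 1 < M) (hρ : 0 < ρ) (hρρmax : ρ ≤ ρmax) :
    let F : Set (ℝ × ℝ) := {p | 0 ≤ p.1 ∧ p.1 ≤ 1 ∧ 0 < p.2 ∧ p.2 ≤ T - K ∧
      ρ * T * p.1 + ρmax * p.2 ≤ ρmax * T ∧ ρ * T ≤ ρ * T * p.1 + ρmax * p.2}
    let R : ℝ → ℝ → ℝ := fun α Td =>
      (Td * K / T) * Real.logb 2 (1 +
        (M - 1) * α * (1 - α) * (ρ * T) ^ 2 /
          (α * (1 - α) * (ρ * T) ^ 2 * (K - 1) + K * (1 - α) * ρ * T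
            + α * ρ * T * Td + Td))
    let Td0 : ℝ := T - K
    let αd : ℝ := (Real.sqrt ((ρ * T * K + Td0) * (ρ * T * Td0 + Td0))
      - (ρ * T * K + Td0)) / (ρ * T * (Td0 - K))
    let α₁ : ℝ := ρmax * K / (ρ * T)
    let α₂ : ℝ := 1 - ρmax * (T - K) / (ρ * T)
    α₂ < αd → αd < α₁ →
      (αd, T - K) ∈ F ∧ ∀ p ∈ F, R p.1 p.2 ≤ R αd (T - K) := by
  intro F R Td0 αd α₁ α₂ hα₂ hα₁
  have hT : 0 < T := by linarith
  have hP : 0 < ρ * T := mul_pos hρ hT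
  have hTd0pos : 0 < T - K := by linarith
  have hKTd0 : K < T - K := by linarith
  have hαd_eq : αd = Real.sqrt (ρ * T * K + (T - K)) /
      (Real.sqrt (ρ * T * K + (T - K)) + Real.sqrt (ρ * T * (T - K) + (T - K))) :=
    alpha_eq (ρ * T) (T - K) K hP hK0 hKTd0
  have ha : 0 < ρ * T * K + (T - K) := by positivity
  have hb : 0 < ρ * T * (T - K) + (T - K) := by nlinarith
  have hs : 0 < Real.sqrt (ρ * T * K + (T - K)) := Real.sqrt_pos.mpr ha
  have ht : 0 < Real.sqrt (ρ * T * (T - K) + (T - K)) := Real.sqrt_pos.mpr hb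
  have hαd0 : 0 ≤ αd := by rw [hαd_eq]; positivity
  have hαd1 : αd ≤ 1 := by
    rw [hαd_eq, div_le_one (by linarith)]; linarith
  have hα₁' : αd < ρmax * K / (ρ * T) := hα₁
  have hα₂' : 1 - ρmax * (T - K) / (ρ * T) < αd := hα₂
  rw [lt_div_iff₀ hP] at hα₁'
  have hupper : ρ * T * αd + ρmax * (T - K) ≤ ρmax * T := by
    have hcomm : αd * (ρ * T) = ρ * T * αd := mul_comm _ _
    nlinarith [hα₁']
  have hlower : ρ * T ≤ ρ * T * αd + ρmax * (T - K) := by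
    have h := mul_lt_mul_of_pos_right hα₂' hP
    have e : (1 - ρmax * (T - K) / (ρ * T)) * (ρ * T) = ρ * T - ρmax * (T - K) := by
      field_simp
    nlinarith [h]
  refine ⟨⟨hαd0, hαd1, hTd0pos, le_refl _, hupper, hlower⟩, ?_⟩
  rintro ⟨α, Td⟩ hp
  have hp' : 0 ≤ α ∧ α ≤ 1 ∧ 0 < Td ∧ Td ≤ T - K ∧
      ρ * T * α + ρmax * Td ≤ ρmax * T ∧ ρ * T ≤ ρ * T * α + ρmax * Td := hp
  obtain ⟨hα0, hα1, hTd, hTdle, -, -⟩ := hp'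
  show R α Td ≤ R αd (T - K)
  rw [hαd_eq]
  exact main_bound T K M ρ hTK hK hM hρ α Td _ hα0 hα1 hTd hTdle rfl
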